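/- Let P be a k-Eulerian poset of rank n+1. For every S ⊆ [1,n] and every maximal interval [i,ℓ] of [1,n]\S, the flag numbers satisfy k((−1)^{i−1} + (−1)^{ℓ+1}) f_S(P) + ∑_{j=i}^{ℓ} (−1)^j f_{S∪{j}}(P) = 0. -/

import Mathlib

open scoped Classical

attribute [local instance] Fintype.ofFinite

/-- A rank function making a bounded poset graded of rank `n+1`. -/
def IsGraded (P : Type) [PartialOrder P] [BoundedOrder P] (ρ : P → ℕ) (n : ℕ) : Prop :=
  ρ ⊥ = 0 ∧ ρ ⊤ = n + 1 ∧ ∀ x y : P, x ⋖ y → ρ y = ρ x + 1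

/-- A poset is `r`-thick if every nonempty open interval has at least `r` elements. -/
def RThick (P : Type) [PartialOrder P] [Fintype P] (r : ℕ) : Prop :=
  ∀ x y : P, x < y → (∃ z, x < z ∧ z < y) →
    r ≤ (Finset.univ.filter fun z => x < z ∧ z < y).card

/-- The flag number `f_S(P)`: the number of chains of `P` whose set of ranks is `S`. -/
noncomputable def flagNum {P : Type} [PartialOrder P] [Fintype P] (ρ : P → ℕ)
    (S : Finset ℕ) : ℕ :=
  (Finset.univ.filter fun c : Finset P =>
    IsChain (· ≤ ·) (c : Set P) ∧ c.image ρ = S ∧ c.card = S.card).card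

/-- The flag number `f_S([x,y])` of the interval `[x,y]`, with ranks relative to `x`. -/
noncomputable def flagNumI {P : Type} [PartialOrder P] [Fintype P] (ρ : P → ℕ)
    (x y : P) (S : Finset ℕ) : ℕ :=
  (Finset.univ.filter fun c : Finset P =>
    IsChain (· ≤ ·) (c : Set P) ∧ (∀ z ∈ c, x < z ∧ z < y) ∧
      c.image (fun z => ρ z - ρ x) = S ∧ c.card = S.card).card

/-- The `k`-Möbius function `μ_k([x,y])`. -/
noncomputable def muk {P : Type} [PartialOrder P] [Fintype P] (k : ℝ) (x : P) (y : P) : ℝ :=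
  if x = y then 1
  else -1 - (1/k) * ∑ z ∈ (Finset.univ.filter fun z => x < z ∧ z < y).attach,
    muk k x z.val
termination_by (Finset.univ.filter fun w => w < y).card
decreasing_by
  have hz : (z : P) < y := (Finset.mem_filter.mp z.2).2.2
  apply Finset.card_lt_card
  rw [Finset.ssubset_iff_of_subset]
  · exact ⟨z, Finset.mem_filter.mpr ⟨Finset.mem_univ _, hz⟩,
      fun hc => absurd (Finset.mem_filter.mp hc).2 (lt_irrefl _)⟩
  · intro w hw
    exact Finset.mem_filter.mpr ⟨Finset.mem_univ _, (Finset.mem_filter.mp hw).2.trans hz⟩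

/-- The ordinary Möbius function of a finite poset. -/
noncomputable def mobius {P : Type} [PartialOrder P] [Fintype P] (x : P) (y : P) : ℤ :=
  if x = y then 1
  else -∑ z ∈ (Finset.univ.filter fun z => x ≤ z ∧ z < y).attach, mobius x z.val
termination_by (Finset.univ.filter fun w => w < y).card
decreasing_by
  have hz : (z : P) < y := (Finset.mem_filter.mp z.2).2.2
  apply Finset.card_lt_card
  rw [Finset.ssubset_iff_of_subset]
  · exact ⟨z, Finset.mem_filter.mpr ⟨Finset.mem_univ _, hz⟩,
      fun hc => absurd (Finset.mem_filter.mp hc).2 (lt_irrefl _)⟩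
  · intro w hw
    exact Finset.mem_filter.mpr ⟨Finset.mem_univ _, (Finset.mem_filter.mp hw).2.trans hz⟩

/-- A graded poset is `k`-Eulerian when `μ_k([x,y]) = (-1)^{ρ(y)-ρ(x)}` on every interval. -/
def IsKEulerian (P : Type) [PartialOrder P] [Fintype P] (ρ : P → ℕ) (k : ℝ) : Prop :=
  ∀ x y : P, x ≤ y → muk k x y = (-1 : ℝ) ^ (ρ y - ρ x)

/-- The flag `L^k` vector of a poset of rank `n+1`. -/
noncomputable def Lk {P : Type} [PartialOrder P] [Fintype P] (k : ℝ) (n : ℕ) (ρ : P → ℕ)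
    (S : Finset ℕ) : ℝ :=
  (-1 : ℝ) ^ (n - S.card) *
    ∑ T ∈ (Finset.Icc 1 n).powerset.filter (fun T => Finset.Icc 1 n \ S ⊆ T),
      (-(1/(2*k))) ^ T.card * (flagNum ρ T : ℝ)

/-- The flag `L^k` vector of an interval `[x,y]` of rank `n+1`. -/
noncomputable def LkI {P : Type} [PartialOrder P] [Fintype P] (k : ℝ) (n : ℕ) (ρ : P → ℕ)
    (x y : P) (S : Finset ℕ) : ℝ :=
  (-1 : ℝ) ^ (n - S.card) *
    ∑ T ∈ (Finset.Icc 1 n).powerset.filter (fun T => Finset.Icc 1 n \ S ⊆ T),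
      (-(1/(2*k))) ^ T.card * (flagNumI ρ x y T : ℝ)

/-- A set is even if it is a disjoint union of intervals of even cardinality. -/
def IsEvenSet (S : Finset ℕ) : Prop :=
  ∃ J : Finset (ℕ × ℕ),
    S = J.biUnion (fun p => Finset.Icc p.1 p.2) ∧
    (∀ p ∈ J, p.1 ≤ p.2 ∧ Even (p.2 + 1 - p.1)) ∧
    (∀ p ∈ J, ∀ q ∈ J, p ≠ q → Disjoint (Finset.Icc p.1 p.2) (Finset.Icc q.1 q.2))

/-- The horizontal `r`-fold duplication `D^r P`. -/
inductive Dup (P : Type) [PartialOrder P] [BoundedOrder P] (r : ℕ) : Type where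
  | bot : Dup P r
  | top : Dup P r
  | mid : {x : P // x ≠ ⊥ ∧ x ≠ ⊤} → Fin r → Dup P r

namespace Dup

variable {P : Type} [PartialOrder P] [BoundedOrder P] {r : ℕ}

def le : Dup P r → Dup P r → Prop
  | .bot, _ => True
  | .mid _ _, .bot => False
  | .mid x i, .mid y j => (x = y ∧ i = j) ∨ (x : P) < (y : P)
  | .mid _ _, .top => True
  | .top, .top => True
  | .top, _ => False

instance : PartialOrder (Dup P r) where
  le := Dup.le
  le_refl a := by cases a with
    | bot => trivial
    | top => trivial
    | mid x i => exact Or.inl ⟨rfl, rfl⟩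
  le_trans a b c hab hbc := by
    cases a with
    | bot => trivial
    | top =>
      cases b with
      | top =>
        cases c with
        | top => trivial
        | bot => exact hbc.elim
        | mid _ _ => exact hbc.elim
      | bot => exact hab.elim
      | mid _ _ => exact hab.elim
    | mid x i =>
      cases b with
      | bot => exact hab.elim
      | top =>
        cases c with
        | top => trivial
        | bot => exact hbc.elim
        | mid _ _ => exact hbc.elim
      | mid y j =>
        cases c with
        | bot => exact hbc.elim
        | top => trivial
        | mid z l =>
          rcases hab with ⟨rfl, rfl⟩ | h1
          · exact hbc
          · rcases hbc with ⟨rfl, rfl⟩ | h2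
            · exact Or.inr h1
            · exact Or.inr (h1.trans h2)
  le_antisymm a b hab hba := by
    cases a with
    | bot =>
      cases b with
      | bot => rfl
      | top => exact hba.elim
      | mid _ _ => exact hba.elim
    | top =>
      cases b with
      | top => rfl
      | bot => exact hab.elim
      | mid _ _ => exact hab.elim
    | mid x i =>
      cases b with
      | bot => exact hab.elim
      | top => exact hba.elim
      | mid y j =>
        rcases hab with ⟨rfl, rfl⟩ | h1
        · rfl
        · rcases hba with ⟨rfl, rfl⟩ | h2
          · exact absurd h1 (lt_irrefl _)
          · exact absurd (h1.trans h2) (lt_irrefl _)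

instance : BoundedOrder (Dup P r) where
  top := .top
  bot := .bot
  le_top a := by cases a <;> trivial
  bot_le a := trivial

instance [Finite P] : Finite (Dup P r) :=
  Finite.of_injective
    (fun a : Dup P r =>
      (match a with
        | .bot => none
        | .top => some none
        | .mid x i => some (some (x, i)) :
        Option (Option ({x : P // x ≠ ⊥ ∧ x ≠ ⊤} × Fin r))))
    (by intro a b h; cases a <;> cases b <;> simp_all)

/-- The rank function of `D^r P`, where `P` has rank `n+1`. -/
def rank (ρ : P → ℕ) (n : ℕ) : Dup P r → ℕ
  | .bot => 0
  | .top => n + 1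
  | .mid x _ => ρ x.val

/-- `a ∈ D^r P` is a copy of `x ∈ P`. -/
def IsCopy (a : Dup P r) (x : P) : Prop :=
  (x = ⊥ ∧ a = .bot) ∨ (x = ⊤ ∧ a = .top) ∨ ∃ h i, a = .mid ⟨x, h⟩ i

end Dup

section auxmain
variable {P : Type} [PartialOrder P] [BoundedOrder P] [Finite P] {ρ : P → ℕ} {n : ℕ} {k : ℝ}

lemma rank_lt_of_lt (hP : IsGraded P ρ n) : ∀ y x : P, x < y → ρ x < ρ y := by
  intro y
  induction y using WellFoundedLT.induction with
  | ind y IH =>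
    intro x hxy
    obtain ⟨z, hz, hzmax⟩ := Finset.exists_maximal
      (s := Finset.univ.filter fun w => x ≤ w ∧ w < y) ⟨x, by simp [hxy]⟩
    simp only [Finset.mem_filter, Finset.mem_univ, true_and] at hz
    have hcov : z ⋖ y := by
      refine ⟨hz.2, fun w hzw hwy => ?_⟩
      exact hzw.not_ge (hzmax (by simp [Finset.mem_filter, hz.1.trans hzw.le, hwy]) hzw.le)
    have hry : ρ y = ρ z + 1 := hP.2.2 z y hcov
    rcases eq_or_lt_of_le hz.1 with rfl | hxz
    · omega
    · have := IH z hz.2 x hxz; omega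

lemma interval_sum (hP : IsGraded P ρ n) (hE : IsKEulerian P ρ k) (hk : 0 < k)
    {x y : P} (hxy : x < y) :
    ∑ z ∈ Finset.univ.filter (fun z => x < z ∧ z < y), (-1:ℝ)^(ρ z - ρ x)
      = -k * (1 + (-1:ℝ)^(ρ y - ρ x)) := by
  have h := hE x y hxy.le
  rw [muk, if_neg hxy.ne] at h
  rw [Finset.sum_attach _ (fun z => muk k x z)] at h
  rw [Finset.sum_congr rfl (fun z hz => hE x z (Finset.mem_filter.mp hz).2.1.le)] at h
  have hk0 : k ≠ 0 := hk.ne'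
  field_simp at h ⊢
  linarith

lemma chain_lt (hP : IsGraded P ρ n) {c : Finset P} (hcc : IsChain (· ≤ ·) (c : Set P))
    {w v : P} (hw : w ∈ c) (hv : v ∈ c) (h : ρ w < ρ v) : w < v := by
  have hne : w ≠ v := fun e => by subst e; omega
  rcases hcc hw hv hne with h1 | h1
  · exact lt_of_le_of_ne h1 hne
  · rcases eq_or_lt_of_le h1 with e | h2
    · exact absurd e.symm hne
    · exact absurd (rank_lt_of_lt hP _ _ h2) (by omega)

/-- choose the element of rank `r` in `c`, defaulting to `d`. -/
noncomputable def pick (ρ : P → ℕ) (r : ℕ) (d : P) (c : Finset P) : P :=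
  if h : ∃ w ∈ c, ρ w = r then h.choose else d

lemma pick_pos {r : ℕ} {d : P} {c : Finset P} (h : ∃ w ∈ c, ρ w = r) :
    pick ρ r d c ∈ c ∧ ρ (pick ρ r d c) = r := by
  rw [pick, dif_pos h]; exact ⟨h.choose_spec.1, h.choose_spec.2⟩

lemma pick_neg {r : ℕ} {d : P} {c : Finset P} (h : ¬ ∃ w ∈ c, ρ w = r) :
    pick ρ r d c = d := by rw [pick, dif_neg h]

end auxmain

section core
variable {P : Type} [PartialOrder P] [BoundedOrder P] [Finite P] {ρ : P → ℕ} {n : ℕ} {k : ℝ}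

/-- The finset of chains with rank set `S`. -/
noncomputable def ChSet (ρ : P → ℕ) (S : Finset ℕ) : Finset (Finset P) :=
  Finset.univ.filter fun c : Finset P =>
    IsChain (· ≤ ·) (c : Set P) ∧ c.image ρ = S ∧ c.card = S.card

lemma flag_eq (S : Finset ℕ) : flagNum ρ S = (ChSet ρ S).card := rfl

lemma mem_ChSet {c : Finset P} {S : Finset ℕ} :
    c ∈ ChSet ρ S ↔ IsChain (· ≤ ·) (c : Set P) ∧ c.image ρ = S ∧ c.card = S.card := by
  simp [ChSet]

variable {S : Finset ℕ} {i ℓ : ℕ}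

lemma chain_injOn {c : Finset P} (hc : c ∈ ChSet ρ S) : Set.InjOn ρ c := by
  rw [mem_ChSet] at hc
  exact Finset.card_image_iff.mp (by rw [hc.2.1, hc.2.2])

lemma rank_mem {c : Finset P} (hc : c ∈ ChSet ρ S) {w : P} (hw : w ∈ c) : ρ w ∈ S :=
  (mem_ChSet.mp hc).2.1 ▸ Finset.mem_image_of_mem ρ hw

lemma xspec (hP : IsGraded P ρ n) (hS : S ⊆ Finset.Icc 1 n) (h1i : 1 ≤ i)
    (hmaxl : i = 1 ∨ i - 1 ∈ S) {c : Finset P} (hc : c ∈ ChSet ρ S) :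
    ρ (pick ρ (i-1) ⊥ c) = i - 1 ∧ (pick ρ (i-1) ⊥ c ∈ c ∨ pick ρ (i-1) ⊥ c = ⊥) := by
  by_cases h : ∃ w ∈ c, ρ w = i - 1
  · exact ⟨(pick_pos h).2, Or.inl (pick_pos h).1⟩
  · have hd := pick_neg (ρ := ρ) (d := (⊥ : P)) h
    refine ⟨?_, Or.inr hd⟩
    rw [hd, hP.1]
    rcases hmaxl with rfl | hi
    · rfl
    · exfalso
      rw [← (mem_ChSet.mp hc).2.1, Finset.mem_image] at hi
      exact h hi

lemma yspec (hP : IsGraded P ρ n) (hS : S ⊆ Finset.Icc 1 n) (hln : ℓ ≤ n)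
    (hmaxr : ℓ = n ∨ ℓ + 1 ∈ S) {c : Finset P} (hc : c ∈ ChSet ρ S) :
    ρ (pick ρ (ℓ+1) ⊤ c) = ℓ + 1 ∧ (pick ρ (ℓ+1) ⊤ c ∈ c ∨ pick ρ (ℓ+1) ⊤ c = ⊤) := by
  by_cases h : ∃ w ∈ c, ρ w = ℓ + 1
  · exact ⟨(pick_pos h).2, Or.inl (pick_pos h).1⟩
  · have hd := pick_neg (ρ := ρ) (d := (⊤ : P)) h
    refine ⟨?_, Or.inr hd⟩
    rw [hd, hP.2.1]
    rcases hmaxr with rfl | hi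
    · rfl
    · exfalso
      rw [← (mem_ChSet.mp hc).2.1, Finset.mem_image] at hi
      exact h hi

lemma le_pickx (hP : IsGraded P ρ n) (hS : S ⊆ Finset.Icc 1 n) (h1i : 1 ≤ i)
    (hmaxl : i = 1 ∨ i - 1 ∈ S) {c : Finset P} (hc : c ∈ ChSet ρ S)
    {w : P} (hw : w ∈ c) (hwr : ρ w ≤ i - 1) : w ≤ pick ρ (i-1) ⊥ c := by
  have hw1 : 1 ≤ ρ w := (Finset.mem_Icc.mp (hS (rank_mem hc hw))).1
  have hex : ∃ w ∈ c, ρ w = i - 1 := by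
    rcases hmaxl with rfl | hi
    · exfalso; omega
    · rw [← (mem_ChSet.mp hc).2.1, Finset.mem_image] at hi; exact hi
  obtain ⟨hm, hr⟩ := pick_pos (d := (⊥ : P)) hex
  rcases eq_or_lt_of_le hwr with he | hlt
  · exact le_of_eq (chain_injOn hc hw hm (by omega))
  · exact (chain_lt hP (mem_ChSet.mp hc).1 hw hm (by omega)).le

lemma picky_le (hP : IsGraded P ρ n) (hS : S ⊆ Finset.Icc 1 n) (hln : ℓ ≤ n)
    (hmaxr : ℓ = n ∨ ℓ + 1 ∈ S) {c : Finset P} (hc : c ∈ ChSet ρ S)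
    {w : P} (hw : w ∈ c) (hwr : ℓ + 1 ≤ ρ w) : pick ρ (ℓ+1) ⊤ c ≤ w := by
  have hwn : ρ w ≤ n := (Finset.mem_Icc.mp (hS (rank_mem hc hw))).2
  have hex : ∃ w ∈ c, ρ w = ℓ + 1 := by
    rcases hmaxr with rfl | hi
    · exfalso; omega
    · rw [← (mem_ChSet.mp hc).2.1, Finset.mem_image] at hi; exact hi
  obtain ⟨hm, hr⟩ := pick_pos (d := (⊤ : P)) hex
  rcases eq_or_lt_of_le hwr with he | hlt
  · exact le_of_eq (chain_injOn hc hm hw (by omega))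
  · exact (chain_lt hP (mem_ChSet.mp hc).1 hm hw (by omega)).le

lemma pickx_lt_picky (hP : IsGraded P ρ n) (hS : S ⊆ Finset.Icc 1 n) (h1i : 1 ≤ i)
    (hil : i ≤ ℓ) (hln : ℓ ≤ n) (hmaxl : i = 1 ∨ i - 1 ∈ S) (hmaxr : ℓ = n ∨ ℓ + 1 ∈ S)
    {c : Finset P} (hc : c ∈ ChSet ρ S) :
    pick ρ (i-1) ⊥ c < pick ρ (ℓ+1) ⊤ c := by
  obtain ⟨hx, hxm⟩ := xspec hP hS h1i hmaxl hc
  obtain ⟨hy, hym⟩ := yspec hP hS hln hmaxr hc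
  rcases hxm with hxm | hxb
  · rcases hym with hym | hyb
    · exact chain_lt hP (mem_ChSet.mp hc).1 hxm hym (by omega)
    · rw [hyb]
      refine Ne.lt_top fun he => ?_
      rw [he, hP.2.1] at hx; omega
  · rw [hxb]
    refine Ne.bot_lt fun he => ?_
    rw [he, hP.1] at hy; omega

lemma count_lemma (hP : IsGraded P ρ n) (hS : S ⊆ Finset.Icc 1 n) (h1i : 1 ≤ i)
    (hil : i ≤ ℓ) (hln : ℓ ≤ n) (hgap : ∀ j ∈ Finset.Icc i ℓ, j ∉ S)
    (hmaxl : i = 1 ∨ i - 1 ∈ S) (hmaxr : ℓ = n ∨ ℓ + 1 ∈ S)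
    {j : ℕ} (hj : j ∈ Finset.Icc i ℓ) :
    flagNum ρ (insert j S) = ∑ c ∈ ChSet ρ S,
      ((Finset.univ.filter fun z : P =>
        pick ρ (i-1) ⊥ c < z ∧ z < pick ρ (ℓ+1) ⊤ c).filter fun z => ρ z = j).card := by
  have hjS : j ∉ S := hgap j hj
  rw [Finset.mem_Icc] at hj
  rw [flag_eq, ← Finset.card_sigma]
  symm
  refine Finset.card_bij (fun a _ => insert a.2 a.1) ?_ ?_ ?_
  · -- maps to
    rintro ⟨c, z⟩ ha
    rw [Finset.mem_sigma] at ha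
    obtain ⟨hc, hz⟩ := ha
    simp only [Finset.mem_filter, Finset.mem_univ, true_and] at hz
    obtain ⟨⟨hxz, hzy⟩, hρz⟩ := hz
    have hcc := (mem_ChSet.mp hc).1
    have hznot : z ∉ c := fun hm => hjS (hρz ▸ rank_mem hc hm)
    rw [mem_ChSet]
    refine ⟨?_, ?_, ?_⟩
    · rw [Finset.coe_insert]
      refine hcc.insert fun w hw hne => ?_
      have hwS : ρ w ∈ S := rank_mem hc hw
      have hwIcc : ρ w ∉ Finset.Icc i ℓ := fun h => hgap _ h hwS
      have hw1 : 1 ≤ ρ w := (Finset.mem_Icc.mp (hS hwS)).1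
      have hwn : ρ w ≤ n := (Finset.mem_Icc.mp (hS hwS)).2
      rw [Finset.mem_Icc] at hwIcc
      rcases lt_or_ge (ρ w) i with hlt | hge
      · exact Or.inr (((le_pickx hP hS h1i hmaxl hc hw (by omega)).trans hxz.le))
      · exact Or.inl (hzy.le.trans (picky_le hP hS hln hmaxr hc hw (by omega)))
    · rw [Finset.image_insert, (mem_ChSet.mp hc).2.1, hρz]
    · rw [Finset.card_insert_of_notMem hznot, Finset.card_insert_of_notMem hjS,
        (mem_ChSet.mp hc).2.2]
  · -- injective
    rintro ⟨c₁, z₁⟩ ha₁ ⟨c₂, z₂⟩ ha₂ he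
    rw [Finset.mem_sigma] at ha₁ ha₂
    simp only [Finset.mem_filter, Finset.mem_univ, true_and] at ha₁ ha₂
    have hz₁ : z₁ ∉ c₁ := fun hm => hjS (ha₁.2.2 ▸ rank_mem ha₁.1 hm)
    have hz₂ : z₂ ∉ c₂ := fun hm => hjS (ha₂.2.2 ▸ rank_mem ha₂.1 hm)
    dsimp only at he
    have hze : z₁ = z₂ := by
      have : z₁ ∈ insert z₂ c₂ := he ▸ Finset.mem_insert_self z₁ c₁
      rcases Finset.mem_insert.mp this with h | h
      · exact h
      · exact absurd (ha₁.2.2 ▸ rank_mem ha₂.1 h) hjS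
    subst hze
    have hce : c₁ = c₂ := by
      have h2 := congrArg (fun s => Finset.erase s z₁) he
      simpa [Finset.erase_insert hz₁, Finset.erase_insert hz₂] using h2
    subst hce; rfl
  · -- surjective
    intro c' hc'
    have hcc' := (mem_ChSet.mp hc').1
    have himg := (mem_ChSet.mp hc').2.1
    have hcard := (mem_ChSet.mp hc').2.2
    have hinj' : Set.InjOn ρ c' := Finset.card_image_iff.mp (by rw [himg, hcard])
    obtain ⟨z, hzc', hρz⟩ : ∃ z ∈ c', ρ z = j := by
      rw [← Finset.mem_image, himg]; exact Finset.mem_insert_self j S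
    set c := c'.erase z with hcdef
    have hsub : (c : Set P) ⊆ (c' : Set P) := by
      intro w hw; exact Finset.mem_coe.mpr (Finset.mem_of_mem_erase (Finset.mem_coe.mp hw))
    have hcS : c ∈ ChSet ρ S := by
      rw [mem_ChSet]
      refine ⟨hcc'.mono hsub, ?_, ?_⟩
      · apply Finset.Subset.antisymm
        · intro r hr
          obtain ⟨w, hw, rfl⟩ := Finset.mem_image.mp hr
          have hwc' := Finset.mem_of_mem_erase hw
          have : ρ w ∈ insert j S := himg ▸ Finset.mem_image_of_mem ρ hwc'
          rcases Finset.mem_insert.mp this with h | h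
          · exact absurd (hinj' hwc' hzc' (h.trans hρz.symm)) (Finset.ne_of_mem_erase hw)
          · exact h
        · intro s hs
          have : s ∈ insert j S := Finset.mem_insert_of_mem hs
          rw [← himg, Finset.mem_image] at this
          obtain ⟨w, hw, rfl⟩ := this
          refine Finset.mem_image_of_mem ρ (Finset.mem_erase.mpr ⟨fun he => ?_, hw⟩)
          exact hjS (by rw [← hρz, ← he]; exact hs)
      · rw [Finset.card_erase_of_mem hzc', hcard, Finset.card_insert_of_notMem hjS]
        omega
    refine ⟨⟨c, z⟩, Finset.mem_sigma.mpr ⟨hcS, ?_⟩, Finset.insert_erase hzc'⟩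
    simp only [Finset.mem_filter, Finset.mem_univ, true_and]
    refine ⟨⟨?_, ?_⟩, hρz⟩
    · obtain ⟨hx, hxm⟩ := xspec hP hS h1i hmaxl hcS
      rcases hxm with hxm | hxb
      · exact chain_lt hP hcc' (hsub hxm) hzc' (by omega)
      · rw [hxb]
        refine Ne.bot_lt fun he => ?_
        rw [he, hP.1] at hρz; omega
    · obtain ⟨hy, hym⟩ := yspec hP hS hln hmaxr hcS
      rcases hym with hym | hyb
      · exact chain_lt hP hcc' hzc' (hsub hym) (by omega)
      · rw [hyb]
        refine Ne.lt_top fun he => ?_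
        rw [he, hP.2.1] at hρz; omega

end core

/-- the generalized Dehn–Sommerville equations for `k`-Eulerian posets. -/
theorem generalized_dehn_sommerville {P : Type} [PartialOrder P] [BoundedOrder P] [Finite P]
    (n : ℕ) (ρ : P → ℕ) (k : ℝ) (hk : 0 < k) (hP : IsGraded P ρ n)
    (hE : IsKEulerian P ρ k) (S : Finset ℕ) (hS : S ⊆ Finset.Icc 1 n)
    (i ℓ : ℕ) (h1i : 1 ≤ i) (hil : i ≤ ℓ) (hln : ℓ ≤ n)
    (hgap : ∀ j ∈ Finset.Icc i ℓ, j ∉ S)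
    (hmaxl : i = 1 ∨ i - 1 ∈ S) (hmaxr : ℓ = n ∨ ℓ + 1 ∈ S) :
    k * ((-1 : ℝ) ^ (i - 1) + (-1 : ℝ) ^ (ℓ + 1)) * (flagNum ρ S : ℝ)
      + ∑ j ∈ Finset.Icc i ℓ, (-1 : ℝ) ^ j * (flagNum ρ (insert j S) : ℝ) = 0 := by
  have key : ∀ c ∈ ChSet ρ S,
      ∑ z ∈ Finset.univ.filter (fun z : P => pick ρ (i-1) ⊥ c < z ∧ z < pick ρ (ℓ+1) ⊤ c),
        (-1:ℝ) ^ (ρ z) = -k * ((-1:ℝ)^(i-1) + (-1:ℝ)^(ℓ+1)) := by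
    intro c hc
    obtain ⟨hx, _⟩ := xspec hP hS h1i hmaxl hc
    obtain ⟨hy, _⟩ := yspec hP hS hln hmaxr hc
    have hxy := pickx_lt_picky hP hS h1i hil hln hmaxl hmaxr hc
    have hstep : ∀ z ∈ Finset.univ.filter
        (fun z : P => pick ρ (i-1) ⊥ c < z ∧ z < pick ρ (ℓ+1) ⊤ c),
        (-1:ℝ)^(ρ z) = (-1:ℝ)^(i-1) * (-1:ℝ)^(ρ z - ρ (pick ρ (i-1) ⊥ c)) := by
      intro z hz
      rw [Finset.mem_filter] at hz
      have h1 := rank_lt_of_lt hP z _ hz.2.1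
      rw [hx] at h1
      rw [← pow_add]
      congr 1
      rw [hx]
      omega
    rw [Finset.sum_congr rfl hstep, ← Finset.mul_sum, interval_sum hP hE hk hxy, hx, hy]
    have hpow : (-1:ℝ)^(i-1) * (-1:ℝ)^(ℓ+1-(i-1)) = (-1:ℝ)^(ℓ+1) := by
      rw [← pow_add]; congr 1; omega
    linear_combination (-k) * hpow
  have hmaps : ∀ c ∈ ChSet ρ S, ∀ z ∈ Finset.univ.filter
      (fun z : P => pick ρ (i-1) ⊥ c < z ∧ z < pick ρ (ℓ+1) ⊤ c),
      ρ z ∈ Finset.Icc i ℓ := by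
    intro c hc z hz
    rw [Finset.mem_filter] at hz
    obtain ⟨hx, _⟩ := xspec hP hS h1i hmaxl hc
    obtain ⟨hy, _⟩ := yspec hP hS hln hmaxr hc
    have h1 := rank_lt_of_lt hP z _ hz.2.1
    have h2 := rank_lt_of_lt hP _ z hz.2.2
    rw [hx] at h1; rw [hy] at h2
    rw [Finset.mem_Icc]
    omega
  have hmain : ∑ j ∈ Finset.Icc i ℓ, (-1:ℝ)^j * (flagNum ρ (insert j S) : ℝ)
      = -k * ((-1:ℝ)^(i-1) + (-1:ℝ)^(ℓ+1)) * (flagNum ρ S : ℝ) := by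
    calc ∑ j ∈ Finset.Icc i ℓ, (-1:ℝ)^j * (flagNum ρ (insert j S) : ℝ)
        = ∑ j ∈ Finset.Icc i ℓ, ∑ c ∈ ChSet ρ S,
            ∑ z ∈ (Finset.univ.filter (fun z : P =>
              pick ρ (i-1) ⊥ c < z ∧ z < pick ρ (ℓ+1) ⊤ c)).filter (fun z => ρ z = j),
              (-1:ℝ)^(ρ z) := by
          refine Finset.sum_congr rfl fun j hj => ?_
          rw [count_lemma hP hS h1i hil hln hgap hmaxl hmaxr hj]
          push_cast
          rw [Finset.mul_sum]
          refine Finset.sum_congr rfl fun c hc => ?_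
          have hconst : ∑ z ∈ (Finset.univ.filter (fun z : P =>
              pick ρ (i-1) ⊥ c < z ∧ z < pick ρ (ℓ+1) ⊤ c)).filter (fun z => ρ z = j),
              (-1:ℝ)^(ρ z) = (((Finset.univ.filter (fun z : P =>
              pick ρ (i-1) ⊥ c < z ∧ z < pick ρ (ℓ+1) ⊤ c)).filter
              (fun z => ρ z = j)).card : ℝ) * (-1:ℝ)^j := by
            rw [Finset.sum_congr rfl (fun z hz => by rw [(Finset.mem_filter.mp hz).2]),
              Finset.sum_const, nsmul_eq_mul]
          rw [hconst]
          ring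
      _ = ∑ c ∈ ChSet ρ S, ∑ j ∈ Finset.Icc i ℓ,
            ∑ z ∈ (Finset.univ.filter (fun z : P =>
              pick ρ (i-1) ⊥ c < z ∧ z < pick ρ (ℓ+1) ⊤ c)).filter (fun z => ρ z = j),
              (-1:ℝ)^(ρ z) := Finset.sum_comm
      _ = ∑ c ∈ ChSet ρ S, ∑ z ∈ Finset.univ.filter (fun z : P =>
              pick ρ (i-1) ⊥ c < z ∧ z < pick ρ (ℓ+1) ⊤ c), (-1:ℝ)^(ρ z) :=
          Finset.sum_congr rfl fun c hc => Finset.sum_fiberwise_of_maps_to (hmaps c hc) _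
      _ = ∑ c ∈ ChSet ρ S, (-k * ((-1:ℝ)^(i-1) + (-1:ℝ)^(ℓ+1))) :=
          Finset.sum_congr rfl key
      _ = -k * ((-1:ℝ)^(i-1) + (-1:ℝ)^(ℓ+1)) * (flagNum ρ S : ℝ) := by
          rw [Finset.sum_const, flag_eq, nsmul_eq_mul]; ring
  rw [hmain]
  ring
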